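/- A circle of diameter 2n−1 drawn symmetrically on a 2n×2n chessboard crosses exactly 8n − 4 cells of the board (i.e., contains a segment of the circle in exactly 8n−4 cells). -/

import Mathlib

open Finset

/-- distance from the cell index to the center band of the board. -/
def fdist (n i : ℕ) : ℕ := if i < n then n - 1 - i else i - n

lemma fdist_lt (n i : ℕ) (hn : 1 ≤ n) (hi : i < 2 * n) : fdist n i < n := by
  unfold fdist; split_ifs <;> omega

lemma fdist_left (n u : ℕ) (hn : 1 ≤ n) (hu : u < n) : fdist n (n - 1 - u) = u := by
  unfold fdist; split_ifs <;> omega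

lemma fdist_right (n u : ℕ) (hu : u < n) : fdist n (n + u) = u := by
  unfold fdist; split_ifs <;> omega

lemma sq_lt_nat (a b : ℕ) (h : a ^ 2 < b ^ 2) : a < b := by
  by_contra hc
  push_neg at hc
  exact absurd (Nat.pow_le_pow_left hc 2) (by omega)

lemma sq_lt_nat' (a b : ℕ) (h : a < b) : a ^ 2 < b ^ 2 :=
  Nat.pow_lt_pow_left h (by omega)

/-- forward bounds: any x strictly inside (i, i+1) has distance to n strictly
between fdist and fdist+1. -/
lemma coord_bounds (n i : ℕ) (hn : 1 ≤ n) (hi : i < 2 * n) (x : ℝ)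
    (h1 : (i : ℝ) < x) (h2 : x < (i : ℝ) + 1) :
    ((fdist n i : ℝ)) ^ 2 < (x - n) ^ 2 ∧ (x - n) ^ 2 < ((fdist n i : ℝ) + 1) ^ 2 := by
  unfold fdist
  split_ifs with h
  · have h1n : (1:ℕ) ≤ n := hn
    have hcast : ((n - 1 - i : ℕ) : ℝ) = (n : ℝ) - 1 - i := by
      have : i ≤ n - 1 := by omega
      push_cast [Nat.cast_sub this, Nat.cast_sub h1n]
      ring
    rw [hcast]
    have hxn : x < (n : ℝ) := by
      have : (i : ℝ) + 1 ≤ (n : ℝ) := by exact_mod_cast Nat.succ_le_of_lt h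
      linarith
    constructor <;> nlinarith
  · have hcast : ((i - n : ℕ) : ℝ) = (i : ℝ) - n := by
      have : n ≤ i := by omega
      push_cast [Nat.cast_sub this]; ring
    rw [hcast]
    have hxn : (n : ℝ) ≤ (i : ℝ) := by exact_mod_cast Nat.le_of_not_lt h
    constructor <;> nlinarith

/-- Endpoints: a nearest-corner coordinate A and a farthest-corner coordinate B. -/
lemma coord_pts (n i : ℕ) (hn : 1 ≤ n) (hi : i < 2 * n) :
    ∃ A B : ℝ, (A - n) ^ 2 = ((fdist n i : ℝ)) ^ 2 ∧ (B - n) ^ 2 = ((fdist n i : ℝ) + 1) ^ 2 ∧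
      ∀ t : ℝ, 0 < t → t < 1 → (i : ℝ) < (1 - t) * A + t * B ∧ (1 - t) * A + t * B < (i : ℝ) + 1 := by
  unfold fdist
  split_ifs with h
  · refine ⟨(i : ℝ) + 1, (i : ℝ), ?_, ?_, ?_⟩
    · have h1 : i ≤ n - 1 := by omega
      push_cast [Nat.cast_sub h1, Nat.cast_sub hn]
      ring
    · have h1 : i ≤ n - 1 := by omega
      push_cast [Nat.cast_sub h1, Nat.cast_sub hn]
      ring
    · intro t ht0 ht1
      constructor <;> nlinarith
  · refine ⟨(i : ℝ), (i : ℝ) + 1, ?_, ?_, ?_⟩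
    · have h1 : n ≤ i := by omega
      push_cast [Nat.cast_sub h1]
      ring
    · have h1 : n ≤ i := by omega
      push_cast [Nat.cast_sub h1]
      ring
    · intro t ht0 ht1
      constructor <;> nlinarith

/-- Existence of a circle point inside the open cell, given the distance condition. -/
lemma exists_pt (n i j : ℕ) (hn : 1 ≤ n) (hi : i < 2 * n) (hj : j < 2 * n)
    (h1 : ((fdist n i : ℝ)) ^ 2 + ((fdist n j : ℝ)) ^ 2 < ((2 * (n : ℝ) - 1) / 2) ^ 2)
    (h2 : ((2 * (n : ℝ) - 1) / 2) ^ 2 < ((fdist n i : ℝ) + 1) ^ 2 + ((fdist n j : ℝ) + 1) ^ 2) :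
    ∃ p : ℝ × ℝ,
      (p.1 - n) ^ 2 + (p.2 - n) ^ 2 = ((2 * (n : ℝ) - 1) / 2) ^ 2 ∧
      (i : ℝ) < p.1 ∧ p.1 < (i : ℝ) + 1 ∧
      (j : ℝ) < p.2 ∧ p.2 < (j : ℝ) + 1 := by
  obtain ⟨A1, B1, hA1, hB1, hin1⟩ := coord_pts n i hn hi
  obtain ⟨A2, B2, hA2, hB2, hin2⟩ := coord_pts n j hn hj
  set r2 : ℝ := ((2 * (n : ℝ) - 1) / 2) ^ 2 with hr2
  set g : ℝ → ℝ := fun t => ((1 - t) * A1 + t * B1 - n) ^ 2 + ((1 - t) * A2 + t * B2 - n) ^ 2 with hg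
  have hg0 : g 0 = ((fdist n i : ℝ)) ^ 2 + ((fdist n j : ℝ)) ^ 2 := by
    simp [hg]; rw [← hA1, ← hA2]
  have hg1 : g 1 = ((fdist n i : ℝ) + 1) ^ 2 + ((fdist n j : ℝ) + 1) ^ 2 := by
    simp [hg]; rw [← hB1, ← hB2]
  have hcont : ContinuousOn g (Set.Icc (0:ℝ) 1) := by
    apply Continuous.continuousOn; fun_prop
  have hsub := intermediate_value_Icc (by norm_num : (0:ℝ) ≤ 1) hcont
  have hmem : r2 ∈ Set.Icc (g 0) (g 1) := by
    rw [hg0, hg1]; exact ⟨le_of_lt h1, le_of_lt h2⟩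
  obtain ⟨t, ht, hgt⟩ := hsub hmem
  have ht0 : 0 < t := by
    rcases lt_or_eq_of_le ht.1 with h' | h'
    · exact h'
    · exfalso; rw [← h'] at hgt; rw [hg0] at hgt; linarith
  have ht1 : t < 1 := by
    rcases lt_or_eq_of_le ht.2 with h' | h'
    · exact h'
    · exfalso; rw [h'] at hgt; rw [hg1] at hgt; linarith
  obtain ⟨hi1, hi2⟩ := hin1 t ht0 ht1
  obtain ⟨hj1, hj2⟩ := hin2 t ht0 ht1
  exact ⟨((1 - t) * A1 + t * B1, (1 - t) * A2 + t * B2), hgt, hi1, hi2, hj1, hj2⟩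

lemma quarter_count (n : ℕ) (hn : 1 ≤ n) :
    ((Finset.range n ×ˢ Finset.range n).filter
      (fun p => 4 * (p.1 ^ 2 + p.2 ^ 2) < (2 * n - 1) ^ 2 ∧
        (2 * n - 1) ^ 2 < 4 * ((p.1 + 1) ^ 2 + (p.2 + 1) ^ 2))).card = 2 * n - 1 := by
  set m : ℕ := (2 * n - 1) ^ 2 with hm
  have hmodd : m % 2 = 1 := by
    have : (2 * n - 1) % 2 = 1 := by omega
    rw [hm, pow_two, Nat.mul_mod, this]
  have hne : ∀ w : ℕ, 4 * w ≠ m := by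
    intro w hw; omega
  set D := Finset.range n ×ˢ Finset.range n with hD
  set S := D.filter (fun p => 4 * (p.1 ^ 2 + p.2 ^ 2) < m) with hS
  set T' := D.filter (fun p => 4 * ((p.1 + 1) ^ 2 + (p.2 + 1) ^ 2) < m) with hT'
  set V := S.filter (fun p => 1 ≤ p.1 ∧ 1 ≤ p.2) with hV
  -- the target set T equals S \ T'
  have hTeq : (D.filter (fun p => 4 * (p.1 ^ 2 + p.2 ^ 2) < m ∧
        m < 4 * ((p.1 + 1) ^ 2 + (p.2 + 1) ^ 2))) = S \ T' := by
    ext p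
    simp only [hS, hT', Finset.mem_sdiff, Finset.mem_filter]
    constructor
    · rintro ⟨hd, h1, h2⟩
      exact ⟨⟨hd, h1⟩, fun hc => by omega⟩
    · rintro ⟨⟨hd, h1⟩, h2⟩
      refine ⟨hd, h1, ?_⟩
      have h3 : ¬ (4 * ((p.1 + 1) ^ 2 + (p.2 + 1) ^ 2) < m) := fun hc => h2 ⟨hd, hc⟩
      have := hne ((p.1 + 1) ^ 2 + (p.2 + 1) ^ 2)
      omega
  rw [hTeq]
  have hT'S : T' ⊆ S := by
    intro p hp
    simp only [hS, hT', Finset.mem_filter] at *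
    refine ⟨hp.1, ?_⟩
    have h2 := hp.2
    have e1 : p.1 ^ 2 ≤ (p.1 + 1) ^ 2 := Nat.pow_le_pow_left (Nat.le_succ p.1) 2
    have e2 : p.2 ^ 2 ≤ (p.2 + 1) ^ 2 := Nat.pow_le_pow_left (Nat.le_succ p.2) 2
    omega
  rw [Finset.card_sdiff_of_subset hT'S]
  -- |T'| = |V| via shifting
  have hcardT' : T'.card = V.card := by
    apply Finset.card_nbij' (fun p => (p.1 + 1, p.2 + 1)) (fun p => (p.1 - 1, p.2 - 1))
    · intro p hp
      simp only [hT', hS, hV, hD, Finset.mem_coe, Finset.mem_filter, Finset.mem_product, Finset.mem_range] at *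
      obtain ⟨⟨hp1, hp2⟩, hlt⟩ := hp
      have hmlt : m < (2 * n) ^ 2 := sq_lt_nat' _ _ (by omega)
      have hb1 : p.1 + 1 < n := by
        have : (2 * (p.1 + 1)) ^ 2 < (2 * n) ^ 2 := by
          have : 4 * (p.1 + 1) ^ 2 < (2 * n) ^ 2 := by omega
          calc (2 * (p.1 + 1)) ^ 2 = 4 * (p.1 + 1) ^ 2 := by ring
          _ < (2 * n) ^ 2 := this
        have := sq_lt_nat _ _ this
        omega
      have hb2 : p.2 + 1 < n := by
        have : (2 * (p.2 + 1)) ^ 2 < (2 * n) ^ 2 := by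
          have : 4 * (p.2 + 1) ^ 2 < (2 * n) ^ 2 := by omega
          calc (2 * (p.2 + 1)) ^ 2 = 4 * (p.2 + 1) ^ 2 := by ring
          _ < (2 * n) ^ 2 := this
        have := sq_lt_nat _ _ this
        omega
      exact ⟨⟨⟨hb1, hb2⟩, hlt⟩, by omega, by omega⟩
    · intro p hp
      simp only [hT', hS, hV, hD, Finset.mem_coe, Finset.mem_filter, Finset.mem_product, Finset.mem_range] at *
      obtain ⟨⟨⟨hp1, hp2⟩, hlt⟩, h1, h2⟩ := hp
      have e1 : p.1 - 1 + 1 = p.1 := by omega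
      have e2 : p.2 - 1 + 1 = p.2 := by omega
      exact ⟨⟨by omega, by omega⟩, by rw [e1, e2]; exact hlt⟩
    · intro p hp; simp
    · intro p hp
      simp only [hV, hS, hD, Finset.mem_coe, Finset.mem_filter] at hp
      obtain ⟨_, h1, h2⟩ := hp
      simp only [Prod.ext_iff]
      constructor <;> omega
  rw [hcardT']
  have hVS : V ⊆ S := Finset.filter_subset _ _
  rw [← Finset.card_sdiff_of_subset hVS]
  -- S \ V = axis cells
  have hSV : S \ V = D.filter (fun p => p.1 = 0 ∨ p.2 = 0) := by
    ext p
    simp only [hV, hS, hD, Finset.mem_sdiff, Finset.mem_filter, Finset.mem_product,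
      Finset.mem_range]
    constructor
    · rintro ⟨⟨hd, h1⟩, h2⟩
      refine ⟨hd, ?_⟩
      by_contra hc
      push_neg at hc
      exact h2 ⟨⟨hd, h1⟩, by omega, by omega⟩
    · rintro ⟨⟨hd1, hd2⟩, h⟩
      have hlt : 4 * (p.1 ^ 2 + p.2 ^ 2) < m := by
        have key : ∀ a : ℕ, a < n → 4 * a ^ 2 < m := by
          intro a ha
          have h1 : (2 * a) ^ 2 < (2 * n - 1) ^ 2 := sq_lt_nat' _ _ (by omega)
          have h2 : (2 * a) ^ 2 = 4 * a ^ 2 := by ring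
          omega
        rcases h with h | h
        · have := key p.2 hd2
          have h0 : p.1 ^ 2 = 0 := by rw [h]; ring
          omega
        · have := key p.1 hd1
          have h0 : p.2 ^ 2 = 0 := by rw [h]; ring
          omega
      exact ⟨⟨⟨hd1, hd2⟩, hlt⟩, fun hc => by omega⟩
  rw [hSV]
  -- count axis cells
  have : D.filter (fun p => p.1 = 0 ∨ p.2 = 0)
      = ({0} ×ˢ Finset.range n) ∪ (Finset.range n ×ˢ {0}) := by
    ext p
    simp only [hD, Finset.mem_filter, Finset.mem_union, Finset.mem_product, Finset.mem_range,
      Finset.mem_singleton]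
    constructor
    · rintro ⟨⟨h1, h2⟩, h | h⟩
      · left; exact ⟨h, h2⟩
      · right; exact ⟨h1, h⟩
    · rintro (⟨h1, h2⟩ | ⟨h1, h2⟩)
      · exact ⟨⟨by omega, h2⟩, Or.inl h1⟩
      · exact ⟨⟨h1, by omega⟩, Or.inr h2⟩
  rw [this]
  have hinter : (({0} ×ˢ Finset.range n) ∩ (Finset.range n ×ˢ {0})) = {((0:ℕ), (0:ℕ))} := by
    ext p
    simp only [Finset.mem_inter, Finset.mem_product, Finset.mem_singleton, Finset.mem_range,
      Prod.ext_iff]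
    constructor
    · rintro ⟨⟨h1, _⟩, _, h2⟩; exact ⟨h1, h2⟩
    · rintro ⟨h1, h2⟩; exact ⟨⟨h1, by omega⟩, by omega, h2⟩
  have hcu := Finset.card_union_add_card_inter ({0} ×ˢ Finset.range n) (Finset.range n ×ˢ {0})
  rw [hinter] at hcu
  simp only [Finset.card_product, Finset.card_singleton, Finset.card_range, one_mul,
    mul_one] at hcu
  omega

lemma board_count (n : ℕ) (hn : 1 ≤ n) :
    ((Finset.range (2 * n) ×ˢ Finset.range (2 * n)).filter
      (fun c => 4 * ((fdist n c.1) ^ 2 + (fdist n c.2) ^ 2) < (2 * n - 1) ^ 2 ∧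
        (2 * n - 1) ^ 2 < 4 * ((fdist n c.1 + 1) ^ 2 + (fdist n c.2 + 1) ^ 2))).card
      = 8 * n - 4 := by
  have hq := quarter_count n hn
  set Tq := (Finset.range n ×ˢ Finset.range n).filter
      (fun p => 4 * (p.1 ^ 2 + p.2 ^ 2) < (2 * n - 1) ^ 2 ∧
        (2 * n - 1) ^ 2 < 4 * ((p.1 + 1) ^ 2 + (p.2 + 1) ^ 2)) with hTq
  have key : ((Finset.range (2 * n) ×ˢ Finset.range (2 * n)).filter
      (fun c => 4 * ((fdist n c.1) ^ 2 + (fdist n c.2) ^ 2) < (2 * n - 1) ^ 2 ∧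
        (2 * n - 1) ^ 2 < 4 * ((fdist n c.1 + 1) ^ 2 + (fdist n c.2 + 1) ^ 2))).card
      = ((Finset.range 2 ×ˢ Finset.range 2) ×ˢ Tq).card := by
    apply Finset.card_nbij'
      (fun c => ((if c.1 < n then 0 else 1, if c.2 < n then 0 else 1),
        (fdist n c.1, fdist n c.2)))
      (fun q => ((if q.1.1 = 0 then n - 1 - q.2.1 else n + q.2.1),
        (if q.1.2 = 0 then n - 1 - q.2.2 else n + q.2.2)))
    · intro c hc
      simp only [Finset.mem_coe, Finset.mem_filter, Finset.mem_product, Finset.mem_range, hTq] at *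
      obtain ⟨⟨h1, h2⟩, h3⟩ := hc
      refine ⟨⟨?_, ?_⟩, ⟨fdist_lt n c.1 hn h1, fdist_lt n c.2 hn h2⟩, h3⟩
      · split_ifs <;> omega
      · split_ifs <;> omega
    · intro q hq'
      simp only [Finset.mem_coe, Finset.mem_filter, Finset.mem_product, Finset.mem_range, hTq] at *
      obtain ⟨⟨hb1, hb2⟩, ⟨hu, hv⟩, hcond⟩ := hq'
      have e1 : fdist n (if q.1.1 = 0 then n - 1 - q.2.1 else n + q.2.1) = q.2.1 := by
        split_ifs
        · exact fdist_left n q.2.1 hn hu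
        · exact fdist_right n q.2.1 hu
      have e2 : fdist n (if q.1.2 = 0 then n - 1 - q.2.2 else n + q.2.2) = q.2.2 := by
        split_ifs
        · exact fdist_left n q.2.2 hn hv
        · exact fdist_right n q.2.2 hv
      refine ⟨⟨?_, ?_⟩, ?_⟩
      · split_ifs <;> omega
      · split_ifs <;> omega
      · rw [e1, e2]; exact hcond
    · intro c hc
      simp only [Finset.mem_coe, Finset.mem_filter, Finset.mem_product, Finset.mem_range] at hc
      obtain ⟨⟨h1, h2⟩, _⟩ := hc
      have g1 : (if (if c.1 < n then 0 else 1) = 0 then n - 1 - fdist n c.1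
          else n + fdist n c.1) = c.1 := by
        by_cases hc : c.1 < n <;> simp [hc, fdist] <;> omega
      have g2 : (if (if c.2 < n then 0 else 1) = 0 then n - 1 - fdist n c.2
          else n + fdist n c.2) = c.2 := by
        by_cases hc : c.2 < n <;> simp [hc, fdist] <;> omega
      simp only [Prod.ext_iff]
      exact ⟨g1, g2⟩
    · intro q hq'
      simp only [Finset.mem_coe, Finset.mem_filter, Finset.mem_product, Finset.mem_range, hTq] at hq'
      obtain ⟨⟨hb1, hb2⟩, ⟨hu, hv⟩, _⟩ := hq'
      simp only [Prod.ext_iff]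
      refine ⟨⟨?_, ?_⟩, ?_, ?_⟩
      · split_ifs <;> omega
      · split_ifs <;> omega
      · rcases (by omega : q.1.1 = 0 ∨ q.1.1 = 1) with h | h <;> simp [h] <;>
          [exact fdist_left n q.2.1 hn hu; exact fdist_right n q.2.1 hu]
      · rcases (by omega : q.1.2 = 0 ∨ q.1.2 = 1) with h | h <;> simp [h] <;>
          [exact fdist_left n q.2.2 hn hv; exact fdist_right n q.2.2 hv]
  rw [key]
  simp only [Finset.card_product, Finset.card_range]
  rw [hq]
  omega

/-- A circle of diameter `2n - 1` drawn symmetrically on a `2n × 2n` chessboard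
contains a segment of the circle (intersects the interior) in exactly `8n - 4`
cells of the board. -/
theorem sagan_stmt_5 (n : ℕ) (hn : 1 ≤ n) :
    {c : ℕ × ℕ | c.1 < 2 * n ∧ c.2 < 2 * n ∧
      ∃ p : ℝ × ℝ,
        (p.1 - n) ^ 2 + (p.2 - n) ^ 2 = ((2 * (n : ℝ) - 1) / 2) ^ 2 ∧
        (c.1 : ℝ) < p.1 ∧ p.1 < (c.1 : ℝ) + 1 ∧
        (c.2 : ℝ) < p.2 ∧ p.2 < (c.2 : ℝ) + 1}.ncard = 8 * n - 4 := by
  have hcast : ((2 * n - 1 : ℕ) : ℝ) = 2 * (n : ℝ) - 1 := by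
    have h2n : (1:ℕ) ≤ 2 * n := by omega
    push_cast [Nat.cast_sub h2n]
    ring
  have hset : {c : ℕ × ℕ | c.1 < 2 * n ∧ c.2 < 2 * n ∧
      ∃ p : ℝ × ℝ,
        (p.1 - n) ^ 2 + (p.2 - n) ^ 2 = ((2 * (n : ℝ) - 1) / 2) ^ 2 ∧
        (c.1 : ℝ) < p.1 ∧ p.1 < (c.1 : ℝ) + 1 ∧
        (c.2 : ℝ) < p.2 ∧ p.2 < (c.2 : ℝ) + 1}
      = ↑((Finset.range (2 * n) ×ˢ Finset.range (2 * n)).filter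
      (fun c => 4 * ((fdist n c.1) ^ 2 + (fdist n c.2) ^ 2) < (2 * n - 1) ^ 2 ∧
        (2 * n - 1) ^ 2 < 4 * ((fdist n c.1 + 1) ^ 2 + (fdist n c.2 + 1) ^ 2))) := by
    ext c
    simp only [Set.mem_setOf_eq, Finset.coe_filter, Finset.mem_product, Finset.mem_range]
    constructor
    · rintro ⟨h1, h2, p, hp, hx1, hx2, hy1, hy2⟩
      refine ⟨⟨h1, h2⟩, ?_, ?_⟩
      · obtain ⟨bx, _⟩ := coord_bounds n c.1 hn h1 p.1 hx1 hx2
        obtain ⟨by', _⟩ := coord_bounds n c.2 hn h2 p.2 hy1 hy2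
        have hr : ((fdist n c.1 : ℝ)) ^ 2 + ((fdist n c.2 : ℝ)) ^ 2
            < ((2 * (n : ℝ) - 1) / 2) ^ 2 := by
          rw [← hp]; linarith
        have : ((4 * ((fdist n c.1) ^ 2 + (fdist n c.2) ^ 2) : ℕ) : ℝ)
            < (((2 * n - 1) ^ 2 : ℕ) : ℝ) := by
          push_cast [hcast]
          nlinarith
        exact_mod_cast this
      · obtain ⟨_, bx⟩ := coord_bounds n c.1 hn h1 p.1 hx1 hx2
        obtain ⟨_, by'⟩ := coord_bounds n c.2 hn h2 p.2 hy1 hy2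
        have hr : ((2 * (n : ℝ) - 1) / 2) ^ 2
            < ((fdist n c.1 : ℝ) + 1) ^ 2 + ((fdist n c.2 : ℝ) + 1) ^ 2 := by
          rw [← hp]; linarith
        have : (((2 * n - 1) ^ 2 : ℕ) : ℝ)
            < ((4 * ((fdist n c.1 + 1) ^ 2 + (fdist n c.2 + 1) ^ 2) : ℕ) : ℝ) := by
          push_cast [hcast]
          nlinarith
        exact_mod_cast this
    · rintro ⟨⟨h1, h2⟩, hc1, hc2⟩
      refine ⟨h1, h2, ?_⟩
      apply exists_pt n c.1 c.2 hn h1 h2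
      · have : ((4 * ((fdist n c.1) ^ 2 + (fdist n c.2) ^ 2) : ℕ) : ℝ)
            < (((2 * n - 1) ^ 2 : ℕ) : ℝ) := by exact_mod_cast hc1
        push_cast [hcast] at this
        nlinarith
      · have : (((2 * n - 1) ^ 2 : ℕ) : ℝ)
            < ((4 * ((fdist n c.1 + 1) ^ 2 + (fdist n c.2 + 1) ^ 2) : ℕ) : ℝ) := by
          exact_mod_cast hc2
        push_cast [hcast] at this
        nlinarith
  rw [hset, Set.ncard_coe_finset]
  exact board_count n hn
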